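/- A finite field K does not have the maximal linear matching property; that is, there exists a positive integer m such that every field extension L of K with [L : K] = m contains a proper intermediate field M with K ⊊ M ⊊ L of finite degree over K. -/

import Mathlib

theorem finite_field_not_maximal_matching (K : Type) [Field K] [Finite K] :
    ∃ m : ℕ, 0 < m ∧ ∀ (L : Type) [Field L] [Algebra K L],
      Module.finrank K L = m →
      ∃ M : IntermediateField K L, ⊥ < M ∧ M < ⊤ ∧ FiniteDimensional K M := by
  classical
  refine ⟨4, by norm_num, fun L _ _ hrank => ?_⟩
  have hfd : FiniteDimensional K L := FiniteDimensional.of_finrank_pos (by omega)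
  have hfin : Finite L := Module.finite_of_finite K
  have hcard : Fintype.card (L ≃ₐ[K] L) = 4 := by
    rw [Fintype.card_eq_nat_card, IsGalois.card_aut_eq_finrank, hrank]
  obtain ⟨g, hg⟩ := exists_prime_orderOf_dvd_card (G := L ≃ₐ[K] L) 2 (by rw [hcard]; norm_num)
  set H : Subgroup (L ≃ₐ[K] L) := Subgroup.zpowers g with hH
  have hHcard : Fintype.card H = 2 := by rw [Fintype.card_eq_nat_card, hH, Nat.card_zpowers, hg]
  refine ⟨IntermediateField.fixedField H, ?_, ?_, inferInstance⟩
  · have hML : Module.finrank (IntermediateField.fixedField H) L = 2 := by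
      rw [IntermediateField.finrank_fixedField_eq_card, ← hHcard, Fintype.card_eq_nat_card]
    have htower := Module.finrank_mul_finrank K (IntermediateField.fixedField H) L
    rw [hML, hrank] at htower
    have hKM : Module.finrank K (IntermediateField.fixedField H) = 2 := by omega
    rw [bot_lt_iff_ne_bot]
    intro hbot
    rw [hbot] at hKM
    simp [IntermediateField.finrank_bot] at hKM
  · rw [lt_top_iff_ne_top]
    intro htop
    have hML : Module.finrank (IntermediateField.fixedField H) L = 2 := by
      rw [IntermediateField.finrank_fixedField_eq_card, ← hHcard, Fintype.card_eq_nat_card]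
    rw [htop] at hML
    simp [IntermediateField.finrank_top] at hML
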